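/- Let n, d ≥ 1 and u : 2^[n] × 2^[d] → ℝ. Define ψ_{ij} by the 2D-Shapley formula ψ_{ij} = (1/(nd)) Σ_{k=1}^n Σ_{l=1}^d [C(n−1,k−1)C(d−1,l−1)]^{-1} Σ_{(S,F)} M_u^{i,j}(S,F), where the inner sum is over S ⊆ [n]\{i} with |S| = k−1 and F ⊆ [d]\{j} with |F| = l−1, and M_u^{i,j}(S,F) = u(S∪{i},F∪{j}) + u(S,F) − u(S∪{i},F) − u(S,F∪{j}). Then Σ_{i=1}^n Σ_{j=1}^d ψ_{ij} = u([n],[d]) − u([n],∅) − u(∅,[d]) + u(∅,∅). -/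

import Mathlib

/-- The mixed second-order difference of a 2D utility. -/
def Mdiff {n d : ℕ} (u : Finset (Fin n) → Finset (Fin d) → ℝ)
    (i : Fin n) (j : Fin d) (S : Finset (Fin n)) (F : Finset (Fin d)) : ℝ :=
  u (insert i S) (insert j F) + u S F - u (insert i S) F - u S (insert j F)

/-- The 2D-Shapley value of cell (i,j). -/
noncomputable def psi2DShap {n d : ℕ} (u : Finset (Fin n) → Finset (Fin d) → ℝ)
    (i : Fin n) (j : Fin d) : ℝ :=
  (1 / ((n : ℝ) * d)) *
    ∑ k ∈ Finset.Icc 1 n, ∑ l ∈ Finset.Icc 1 d,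
      (1 / (((n - 1).choose (k - 1) : ℝ) * ((d - 1).choose (l - 1) : ℝ))) *
        ∑ S ∈ (Finset.univ.erase i).powersetCard (k - 1),
          ∑ F ∈ (Finset.univ.erase j).powersetCard (l - 1),
            Mdiff u i j S F


open Finset

lemma sumA {n k : ℕ} (hk1 : 1 ≤ k) (v : Finset (Fin n) → ℝ) :
    ∑ i : Fin n, ∑ S ∈ (Finset.univ.erase i).powersetCard (k - 1), v (insert i S)
      = (k : ℝ) * ∑ T ∈ Finset.univ.powersetCard k, v T := by
  have hR : (k : ℝ) * ∑ T ∈ Finset.univ.powersetCard k, v T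
      = ∑ T ∈ Finset.univ.powersetCard k, ∑ _i ∈ T, v T := by
    rw [mul_sum]
    refine sum_congr rfl fun T hT => ?_
    rw [sum_const, nsmul_eq_mul, (mem_powersetCard.1 hT).2]
  rw [hR, sum_sigma', sum_sigma']
  refine sum_nbij' (fun p => ⟨insert p.1 p.2, p.1⟩) (fun q => ⟨q.2, q.1.erase q.2⟩)
    ?_ ?_ ?_ ?_ ?_
  · rintro ⟨i, S⟩ hp
    rw [mem_sigma] at hp ⊢
    have hS := mem_powersetCard.1 hp.2
    have hiS : i ∉ S := (subset_erase.1 hS.1).2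
    refine ⟨mem_powersetCard.2 ⟨subset_univ _, ?_⟩, mem_insert_self _ _⟩
    rw [card_insert_of_notMem hiS, hS.2]; omega
  · rintro ⟨T, i⟩ hq
    rw [mem_sigma] at hq ⊢
    have hT := mem_powersetCard.1 hq.1
    refine ⟨mem_univ _, mem_powersetCard.2 ⟨subset_erase.2 ⟨subset_univ _, notMem_erase _ _⟩, ?_⟩⟩
    rw [card_erase_of_mem hq.2, hT.2]
  · rintro ⟨i, S⟩ hp
    rw [mem_sigma] at hp
    have hiS : i ∉ S := (subset_erase.1 (mem_powersetCard.1 hp.2).1).2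
    simp [erase_insert hiS]
  · rintro ⟨T, i⟩ hq
    rw [mem_sigma] at hq
    simp [insert_erase hq.2]
  · rintro ⟨i, S⟩ hp
    rfl

lemma sumB {n k : ℕ} (hk1 : 1 ≤ k) (hk : k ≤ n) (v : Finset (Fin n) → ℝ) :
    ∑ i : Fin n, ∑ S ∈ (Finset.univ.erase i).powersetCard (k - 1), v S
      = ((n - k + 1 : ℕ) : ℝ) * ∑ S ∈ Finset.univ.powersetCard (k - 1), v S := by
  rw [sum_comm' (t' := Finset.univ.powersetCard (k - 1)) (s' := fun S => Sᶜ) ?h]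
  case h =>
    intro i S
    simp only [mem_univ, true_and, mem_powersetCard, mem_compl, subset_erase, and_assoc,
      subset_univ, true_and]
  rw [mul_sum]
  refine sum_congr rfl fun S hS => ?_
  rw [sum_const, nsmul_eq_mul, card_compl, (mem_powersetCard.1 hS).2, Fintype.card_fin]
  congr 2
  omega

noncomputable def shap1 {n : ℕ} (v : Finset (Fin n) → ℝ) (i : Fin n) : ℝ :=
  (1 / (n : ℝ)) * ∑ k ∈ Finset.Icc 1 n,
    (1 / ((n - 1).choose (k - 1) : ℝ)) *
      ∑ S ∈ (Finset.univ.erase i).powersetCard (k - 1), (v (insert i S) - v S)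

lemma shap_eff {n : ℕ} (hn : 1 ≤ n) (v : Finset (Fin n) → ℝ) :
    ∑ i, shap1 v i = v Finset.univ - v ∅ := by
  set e : ℕ → ℝ := fun j => (1 / (n.choose j : ℝ)) * ∑ T ∈ Finset.univ.powersetCard j, v T
    with he
  have step1 : ∑ i, shap1 v i = ∑ k ∈ Finset.Icc 1 n, (e k - e (k - 1)) := by
    simp only [shap1, mul_sum]
    rw [sum_comm]
    refine sum_congr rfl fun k hk => ?_
    obtain ⟨hk1, hkn⟩ := Finset.mem_Icc.1 hk
    have hn0 : (n : ℝ) ≠ 0 := by positivity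
    have hc' : (((n - 1).choose (k - 1) : ℕ) : ℝ) ≠ 0 :=
      Nat.cast_ne_zero.2 (Nat.choose_pos (by omega : k - 1 ≤ n - 1)).ne'
    have hck : ((n.choose k : ℕ) : ℝ) ≠ 0 :=
      Nat.cast_ne_zero.2 (Nat.choose_pos hkn).ne'
    have hck' : ((n.choose (k - 1) : ℕ) : ℝ) ≠ 0 :=
      Nat.cast_ne_zero.2 (Nat.choose_pos (by omega)).ne'
    have h1nat : n * (n - 1).choose (k - 1) = n.choose k * k := by
      have h := Nat.add_one_mul_choose_eq (n - 1) (k - 1)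
      have e1 : n - 1 + 1 = n := by omega
      have e2 : k - 1 + 1 = k := by omega
      rw [e1, e2] at h
      exact h
    have h2nat : (n - 1).choose (k - 1) * n = n.choose (k - 1) * (n - k + 1) := by
      have h := Nat.choose_mul_succ_eq (n - 1) (k - 1)
      have e1 : n - 1 + 1 = n := by omega
      have e2 : n - (k - 1) = n - k + 1 := by omega
      rw [e1, e2] at h
      exact h
    have hb1 : (k : ℝ) / ((n : ℝ) * (((n - 1).choose (k - 1) : ℕ) : ℝ))
        = 1 / ((n.choose k : ℕ) : ℝ) := by
      rw [div_eq_div_iff (mul_ne_zero hn0 hc') hck]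
      have h1r : (n : ℝ) * ((n - 1).choose (k - 1) : ℕ) = ((n.choose k : ℕ) : ℝ) * k := by
        exact_mod_cast h1nat
      linear_combination -h1r
    have hb2 : (((n - k + 1 : ℕ) : ℝ)) / ((n : ℝ) * (((n - 1).choose (k - 1) : ℕ) : ℝ))
        = 1 / ((n.choose (k - 1) : ℕ) : ℝ) := by
      rw [div_eq_div_iff (mul_ne_zero hn0 hc') hck']
      have h2r : (((n - 1).choose (k - 1) : ℕ) : ℝ) * n
          = ((n.choose (k - 1) : ℕ) : ℝ) * ((n - k + 1 : ℕ) : ℝ) := by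
        exact_mod_cast h2nat
      linear_combination -h2r
    have hA := sumA hk1 v
    have hB := sumB hk1 hkn v
    simp only [← mul_sum]
    simp only [sum_sub_distrib]
    rw [hA, hB]
    simp only [he]
    linear_combination (∑ T ∈ Finset.univ.powersetCard k, v T) * hb1
      - (∑ S ∈ Finset.univ.powersetCard (k - 1), v S) * hb2
  rw [step1, ← Finset.Ico_add_one_right_eq_Icc, Finset.sum_Ico_eq_sum_range]
  simp only [Nat.add_sub_cancel, Nat.succ_sub_one]
  have hcongr : ∀ j ∈ Finset.range n, e (1 + j) - e (1 + j - 1) = e (j + 1) - e j := by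
    intro j _
    congr 1
    · rw [Nat.add_comm]
    · congr 1
      omega
  rw [sum_congr rfl hcongr, Finset.sum_range_sub e]
  have hen : e n = v Finset.univ := by
    have hp := Finset.powersetCard_self (Finset.univ : Finset (Fin n))
    simp only [Finset.card_univ, Fintype.card_fin] at hp
    rw [he]
    simp only []
    rw [hp, Nat.choose_self]
    simp
  have he0 : e 0 = v ∅ := by
    rw [he]
    simp
  rw [hen, he0]

lemma shap1_sum {n : ℕ} {ι : Type*} (t : Finset ι) (w : ι → Finset (Fin n) → ℝ) (i : Fin n) :
    shap1 (fun S => ∑ j ∈ t, w j S) i = ∑ j ∈ t, shap1 (w j) i := by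
  simp only [shap1, ← sum_sub_distrib, mul_sum]
  exact (sum_congr rfl fun k _ => sum_comm).trans sum_comm

lemma psi_factor {n d : ℕ} (u : Finset (Fin n) → Finset (Fin d) → ℝ) (i : Fin n) (j : Fin d) :
    psi2DShap u i j = shap1 (fun S => shap1 (u S) j) i := by
  simp only [psi2DShap, shap1, Mdiff, ← mul_sub, ← sum_sub_distrib, mul_sum]
  refine sum_congr rfl fun k _ => ?_
  rw [sum_comm]
  refine sum_congr rfl fun l _ => ?_
  refine sum_congr rfl fun S _ => ?_
  refine sum_congr rfl fun F _ => ?_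
  ring

/-- 2D-efficiency of 2D-Shapley. -/
theorem stmt_11 (n d : ℕ) (hn : 1 ≤ n) (hd : 1 ≤ d)
    (u : Finset (Fin n) → Finset (Fin d) → ℝ) :
    ∑ i, ∑ j, psi2DShap u i j =
      u Finset.univ Finset.univ - u Finset.univ ∅ - u ∅ Finset.univ + u ∅ ∅ := by
  have h1 : ∀ i : Fin n, ∑ j, psi2DShap u i j
      = shap1 (fun S => u S Finset.univ - u S ∅) i := by
    intro i
    calc ∑ j, psi2DShap u i j = ∑ j, shap1 (fun S => shap1 (u S) j) i :=
          sum_congr rfl fun j _ => psi_factor u i j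
      _ = shap1 (fun S => ∑ j, shap1 (u S) j) i := (shap1_sum _ _ i).symm
      _ = shap1 (fun S => u S Finset.univ - u S ∅) i := by
          congr 1
          funext S
          exact shap_eff hd (u S)
  calc ∑ i, ∑ j, psi2DShap u i j
      = ∑ i, shap1 (fun S => u S Finset.univ - u S ∅) i := sum_congr rfl fun i _ => h1 i
    _ = (u Finset.univ Finset.univ - u Finset.univ ∅) - (u ∅ Finset.univ - u ∅ ∅) :=
        shap_eff hn _
    _ = u Finset.univ Finset.univ - u Finset.univ ∅ - u ∅ Finset.univ + u ∅ ∅ := by ring
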